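/- Let F, F' ∈ ℝ^K and y ∈ [K], and define the cross-entropy loss ℓ(F) = -log(exp(F_y)/Σ_{k=1}^K exp(F_k)) and p_y(F) = exp(F_y)/Σ_k exp(F_k). Writing Δ_k = F'_k - F_k, we have ℓ(F') - ℓ(F) ≤ log(1 + (1 - p_y(F)) · max_{j≠y}(exp(Δ_j - Δ_y) - 1)). -/

import Mathlib

/-- One-step cross-entropy loss increment bound:
`ℓ(F') - ℓ(F) ≤ log(1 + (1 - p_y(F)) · max_{j≠y}(exp(Δ_j - Δ_y) - 1))`
where `Δ_k = F'_k - F_k`. -/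
theorem stmt15 (K : ℕ) (F F' : Fin K → ℝ) (y : Fin K)
    (hne : (Finset.univ.erase y).Nonempty) :
    (-Real.log (Real.exp (F' y) / ∑ k, Real.exp (F' k))) -
        (-Real.log (Real.exp (F y) / ∑ k, Real.exp (F k))) ≤
      Real.log (1 + (1 - Real.exp (F y) / ∑ k, Real.exp (F k)) *
        ((Finset.univ.erase y).sup' hne fun j =>
          Real.exp ((F' j - F j) - (F' y - F y)) - 1)) := by
  set A : ℝ := ∑ k, Real.exp (F k) with hA
  set B : ℝ := ∑ k, Real.exp (F' k) with hB
  set M : ℝ := (Finset.univ.erase y).sup' hne fun j =>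
      Real.exp ((F' j - F j) - (F' y - F y)) - 1 with hM
  set E : ℝ := ∑ j ∈ Finset.univ.erase y, Real.exp (F j) with hE
  have hApos : 0 < A := Finset.sum_pos (fun _ _ => Real.exp_pos _) ⟨y, Finset.mem_univ y⟩
  have hBpos : 0 < B := Finset.sum_pos (fun _ _ => Real.exp_pos _) ⟨y, Finset.mem_univ y⟩
  have hEnn : 0 ≤ E := Finset.sum_nonneg fun _ _ => (Real.exp_pos _).le
  have hM1 : 0 < 1 + M := by
    obtain ⟨j, hj⟩ := hne
    have := Finset.le_sup' (fun j => Real.exp ((F' j - F j) - (F' y - F y)) - 1) hj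
    have := Real.exp_pos ((F' j - F j) - (F' y - F y))
    rw [← hM] at *
    linarith
  have hAE : A = Real.exp (F y) + E :=
    (Finset.add_sum_erase Finset.univ (fun k => Real.exp (F k)) (Finset.mem_univ y)).symm
  have hBE : B = Real.exp (F' y) + ∑ j ∈ Finset.univ.erase y, Real.exp (F' j) :=
    (Finset.add_sum_erase Finset.univ (fun k => Real.exp (F' k)) (Finset.mem_univ y)).symm
  -- key pointwise bound
  have hsum : ∑ j ∈ Finset.univ.erase y, Real.exp (F' j) ≤
      Real.exp (F' y - F y) * ((1 + M) * E) := by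
    rw [hE, Finset.mul_sum, Finset.mul_sum]
    apply Finset.sum_le_sum
    intro j hj
    have hle : Real.exp ((F' j - F j) - (F' y - F y)) - 1 ≤ M := by
      rw [hM]; exact Finset.le_sup' (fun j => Real.exp ((F' j - F j) - (F' y - F y)) - 1) hj
    have : Real.exp (F' j) =
        Real.exp (F' y - F y) * (Real.exp ((F' j - F j) - (F' y - F y)) * Real.exp (F j)) := by
      rw [← Real.exp_add, ← Real.exp_add]
      ring_nf
    rw [this]
    have h2 : Real.exp ((F' j - F j) - (F' y - F y)) ≤ 1 + M := by linarith
    exact mul_le_mul_of_nonneg_left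
      (mul_le_mul_of_nonneg_right h2 (Real.exp_pos (F j)).le)
      (Real.exp_pos (F' y - F y)).le
  have hkey : B ≤ Real.exp (F' y - F y) * (A + E * M) := by
    have : Real.exp (F' y) = Real.exp (F' y - F y) * Real.exp (F y) := by
      rw [← Real.exp_add]; ring_nf
    rw [hBE, this, hAE]
    nlinarith [Real.exp_pos (F' y - F y)]
  have hAEM : 0 < A + E * M := by nlinarith [Real.exp_pos (F y)]
  -- rewrite the target RHS
  have hR : 1 + (1 - Real.exp (F y) / A) * M = (A + E * M) / A := by
    have hy : Real.exp (F y) = A - E := by linarith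
    rw [hy]
    field_simp
    ring
  rw [hR]
  -- rewrite logs
  rw [Real.log_div (Real.exp_ne_zero _) hBpos.ne', Real.log_div (Real.exp_ne_zero _) hApos.ne',
    Real.log_div hAEM.ne' hApos.ne', Real.log_exp, Real.log_exp]
  have hlogB : Real.log B ≤ (F' y - F y) + Real.log (A + E * M) := by
    calc Real.log B ≤ Real.log (Real.exp (F' y - F y) * (A + E * M)) :=
          Real.log_le_log hBpos hkey
      _ = (F' y - F y) + Real.log (A + E * M) := by
          rw [Real.log_mul (Real.exp_ne_zero _) hAEM.ne', Real.log_exp]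
  linarith
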